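/- In the Max Vertex Cover reduction instance, there exists a vertex cover S of size k covering W edges of G if and only if there exists a viable set A of size k' = 2kΓ with PD(A) ≥ W + kΓ. -/

import Mathlib

open scoped Classical

/-- A sink: a vertex with no outgoing edges. -/
def IsSink {X : Type*} (E : X → X → Prop) (x : X) : Prop := ∀ y, ¬ E x y

/-- A set `S` is viable if each member is a sink or has an out-neighbor in `S`. -/
def Viable {X : Type*} (E : X → X → Prop) (S : Finset X) : Prop :=
  ∀ s ∈ S, IsSink E s ∨ ∃ s' ∈ S, E s s'

/-- Food web of the Max Vertex Cover reduction: species are the copies `v_i`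
(left summand) and the auxiliary species `v'_i` (right summand), for `v` a
vertex of `G` and `i < Γ`. Each copy `v_i` depends on the top chain element
`v'_{Γ-1}`, and the chain elements `v'_i` depend on `v'_{i-1}`. -/
def mvcE {V : Type*} {Γ : ℕ} :
    ((V × Fin Γ) ⊕ (V × Fin Γ)) → ((V × Fin Γ) ⊕ (V × Fin Γ)) → Prop
  | Sum.inl (v, _), Sum.inr (v', a) => v = v' ∧ (a : ℕ) = Γ - 1
  | Sum.inr (v, a), Sum.inr (v', b) => v = v' ∧ (a : ℕ) = (b : ℕ) + 1
  | _, _ => False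

/-- Phylogenetic diversity in the reduction instance: each copy `v_i` in `A`
contributes `1` (the weight of the tree edge above it), and each edge `f` of
`G` whose inner tree node has a child `u_i` in `A` (where `f` is the `i`-th
incident edge of `u`, as given by the incidence numbering `ord`) contributes
another `1`; the auxiliary species `v'_i` contribute `0`. -/
noncomputable def mvcPD {V : Type*} [DecidableEq V] {Γ : ℕ}
    (Edges : Finset (Sym2 V)) (ord : V → Sym2 V → Fin Γ)
    (A : Finset ((V × Fin Γ) ⊕ (V × Fin Γ))) : ℕ :=
  (A.filter (fun x => x.isLeft)).card +
    (Edges.filter (fun e => ∃ u : V, ∃ i : Fin Γ,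
      u ∈ e ∧ ord u e = i ∧ Sum.inl (u, i) ∈ A)).card

lemma mvc_chain {V : Type*} {Γ : ℕ} (hΓ : 1 ≤ Γ)
    {A : Finset ((V × Fin Γ) ⊕ (V × Fin Γ))} (hA : Viable mvcE A)
    {v : V} {i : Fin Γ} (h : Sum.inl (v, i) ∈ A) :
    ∀ a : Fin Γ, Sum.inr (v, a) ∈ A := by
  have htop : Sum.inr (v, (⟨Γ - 1, by omega⟩ : Fin Γ)) ∈ A := by
    rcases hA _ h with hs | ⟨s', hs', hE⟩
    · exact absurd (hs (Sum.inr (v, ⟨Γ - 1, by omega⟩))) (by simp [mvcE])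
    · match s', hE with
      | Sum.inr (v', a), ⟨hv, ha⟩ =>
        subst hv
        have : a = (⟨Γ - 1, by omega⟩ : Fin Γ) := Fin.ext ha
        rwa [this] at hs'
  have hstep : ∀ a : Fin Γ, Sum.inr (v, a) ∈ A → 0 < (a : ℕ) →
      Sum.inr (v, (⟨(a : ℕ) - 1, by omega⟩ : Fin Γ)) ∈ A := by
    intro a ha hpos
    rcases hA _ ha with hs | ⟨s', hs', hE⟩
    · exact absurd (hs (Sum.inr (v, ⟨(a : ℕ) - 1, by omega⟩)))
        (by simp [mvcE]; omega)
    · match s', hE with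
      | Sum.inr (v', b), ⟨hv, hb⟩ =>
        subst hv
        have : b = (⟨(a : ℕ) - 1, by omega⟩ : Fin Γ) := Fin.ext (by simp; omega)
        rwa [this] at hs'
  have key : ∀ m : ℕ, Sum.inr (v, (⟨Γ - 1 - m, by omega⟩ : Fin Γ)) ∈ A := by
    intro m
    induction m with
    | zero => simpa using htop
    | succ n ih =>
      by_cases hn : Γ - 1 - (n + 1) = Γ - 1 - n
      · have : (⟨Γ - 1 - (n+1), by omega⟩ : Fin Γ) = ⟨Γ - 1 - n, by omega⟩ :=
          Fin.ext (by simp [hn])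
        rw [this]; exact ih
      · have hpos : 0 < Γ - 1 - n := by omega
        have := hstep _ ih hpos
        have heq : (⟨Γ - 1 - n - 1, by omega⟩ : Fin Γ)
            = (⟨Γ - 1 - (n + 1), by omega⟩ : Fin Γ) := Fin.ext (by simp; omega)
        simpa [heq] using this
  intro a
  have : a = (⟨Γ - 1 - (Γ - 1 - (a : ℕ)), by omega⟩ : Fin Γ) :=
    Fin.ext (by have := a.isLt; simp; omega)
  rw [this]; exact key _

lemma mvc_forward {V : Type*} [Fintype V] [DecidableEq V]
    (Edges : Finset (Sym2 V)) (Γ k : ℕ) (hΓ : 1 ≤ Γ)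
    (ord : V → Sym2 V → Fin Γ) (W : ℕ)
    (S : Finset V) (hcard : S.card = k)
    (hcov : W ≤ (Edges.filter (fun e => ∃ v ∈ S, v ∈ e)).card) :
    ∃ A : Finset ((V × Fin Γ) ⊕ (V × Fin Γ)),
      Viable mvcE A ∧ A.card = 2 * k * Γ ∧ W + k * Γ ≤ mvcPD Edges ord A := by
  set A : Finset ((V × Fin Γ) ⊕ (V × Fin Γ)) :=
    ((S ×ˢ Finset.univ).image Sum.inl) ∪ ((S ×ˢ Finset.univ).image Sum.inr) with hAdef
  have hmeml : ∀ v (i : Fin Γ), Sum.inl (v, i) ∈ A ↔ v ∈ S := by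
    intro v i; simp [hAdef]
  have hmemr : ∀ v (a : Fin Γ), Sum.inr (v, a) ∈ A ↔ v ∈ S := by
    intro v a; simp [hAdef]
  refine ⟨A, ?_, ?_, ?_⟩
  · intro s hs
    match s with
    | Sum.inl (v, i) =>
      right
      exact ⟨Sum.inr (v, ⟨Γ - 1, by omega⟩), (hmemr _ _).2 ((hmeml v i).1 hs),
        ⟨rfl, rfl⟩⟩
    | Sum.inr (v, a) =>
      by_cases h0 : (a : ℕ) = 0
      · left
        intro y hy
        match y, hy with
        | Sum.inr (v', b), ⟨_, hb⟩ => omega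
      · right
        exact ⟨Sum.inr (v, ⟨(a : ℕ) - 1, by omega⟩),
          (hmemr _ _).2 ((hmemr v a).1 hs), ⟨rfl, by simp; omega⟩⟩
  · have hdisj : Disjoint ((S ×ˢ (Finset.univ : Finset (Fin Γ))).image
          (Sum.inl : V × Fin Γ → (V × Fin Γ) ⊕ (V × Fin Γ)))
        ((S ×ˢ Finset.univ).image Sum.inr) := by
      simp [Finset.disjoint_left]
    rw [hAdef, Finset.card_union_of_disjoint hdisj,
      Finset.card_image_of_injective _ Sum.inl_injective,
      Finset.card_image_of_injective _ Sum.inr_injective,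
      Finset.card_product, hcard]
    simp [Finset.card_univ]
    ring
  · have hleft : A.filter (fun x => x.isLeft) = (S ×ˢ Finset.univ).image Sum.inl := by
      ext x
      simp only [hAdef, Finset.mem_filter, Finset.mem_union]
      constructor
      · rintro ⟨h | h, hl⟩
        · exact h
        · simp only [Finset.mem_image] at h
          obtain ⟨p, _, rfl⟩ := h
          simp at hl
      · intro h
        refine ⟨Or.inl h, ?_⟩
        simp only [Finset.mem_image] at h
        obtain ⟨p, _, rfl⟩ := h
        simp
    have hlc : (A.filter (fun x => x.isLeft)).card = k * Γ := by
      rw [hleft, Finset.card_image_of_injective _ Sum.inl_injective,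
        Finset.card_product, hcard]
      simp [Finset.card_univ]
    unfold mvcPD
    rw [hlc, add_comm (k * Γ)]
    refine Nat.add_le_add_right (le_trans hcov (Finset.card_le_card ?_)) _
    intro e he
    simp only [Finset.mem_filter] at he ⊢
    obtain ⟨heE, v, hvS, hve⟩ := he
    exact ⟨heE, v, ord v e, hve, rfl, (hmeml _ _).2 hvS⟩

lemma mvc_backward {V : Type*} [Fintype V] [DecidableEq V]
    (Edges : Finset (Sym2 V)) (Γ k : ℕ) (hΓ : 1 ≤ Γ)
    (hdeg : ∀ v : V, (Edges.filter (fun e => v ∈ e)).card ≤ Γ)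
    (ord : V → Sym2 V → Fin Γ) (hk : k ≤ Fintype.card V) (W : ℕ)
    (A : Finset ((V × Fin Γ) ⊕ (V × Fin Γ)))
    (hA : Viable mvcE A) (hcardA : A.card = 2 * k * Γ)
    (hPD : W + k * Γ ≤ mvcPD Edges ord A) :
    ∃ S : Finset V, S.card = k ∧
      W ≤ (Edges.filter (fun e => ∃ v ∈ S, v ∈ e)).card := by
  classical
  set T : Finset V := Finset.univ.filter (fun v => ∃ i : Fin Γ, Sum.inl (v, i) ∈ A)
    with hTdef
  set t := T.card with htdef
  -- rewrite hPD
  unfold mvcPD at hPD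
  have hPD2 : W + k * Γ ≤ (A.filter (fun x => x.isLeft)).card +
      (Edges.filter (fun e => ∃ u : V, ∃ i : Fin Γ,
        u ∈ e ∧ ord u e = i ∧ Sum.inl (u, i) ∈ A)).card := by
    refine le_trans hPD (Nat.add_le_add_left (Finset.card_le_card ?_) _)
    intro e he
    simp only [Finset.mem_filter] at he ⊢
    exact he
  -- L bound
  have hL_le : (A.filter (fun x => x.isLeft)).card ≤ t * Γ := by
    have hsub : A.filter (fun x => x.isLeft) ⊆ (T ×ˢ Finset.univ).image
        (Sum.inl : V × Fin Γ → (V × Fin Γ) ⊕ (V × Fin Γ)) := by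
      intro x hx
      simp only [Finset.mem_filter] at hx
      match x, hx with
      | Sum.inl (v, i), ⟨hmem, _⟩ =>
        simp only [Finset.mem_image, Finset.mem_product, Finset.mem_univ, and_true]
        exact ⟨(v, i), by simp [hTdef]; exact ⟨i, hmem⟩, rfl⟩
    calc (A.filter (fun x => x.isLeft)).card
        ≤ ((T ×ˢ (Finset.univ : Finset (Fin Γ))).image
            (Sum.inl : V × Fin Γ → (V × Fin Γ) ⊕ (V × Fin Γ))).card :=
          Finset.card_le_card hsub
      _ = t * Γ := by
          rw [Finset.card_image_of_injective _ Sum.inl_injective,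
            Finset.card_product]
          simp [Finset.card_univ, htdef]
  -- R bound
  have hR_ge : t * Γ ≤ (A.filter (fun x => ¬ x.isLeft)).card := by
    have hsub : (T ×ˢ (Finset.univ : Finset (Fin Γ))).image
        (Sum.inr : V × Fin Γ → (V × Fin Γ) ⊕ (V × Fin Γ)) ⊆
        A.filter (fun x => ¬ x.isLeft) := by
      intro x hx
      simp only [Finset.mem_image, Finset.mem_product, Finset.mem_univ, and_true] at hx
      obtain ⟨⟨v, a⟩, hvT, rfl⟩ := hx
      simp only [hTdef, Finset.mem_filter, Finset.mem_univ, true_and] at hvT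
      obtain ⟨i, hi⟩ := hvT
      simp only [Finset.mem_filter]
      exact ⟨mvc_chain hΓ hA hi a, by simp⟩
    calc t * Γ
        = ((T ×ˢ (Finset.univ : Finset (Fin Γ))).image
            (Sum.inr : V × Fin Γ → (V × Fin Γ) ⊕ (V × Fin Γ))).card := by
          rw [Finset.card_image_of_injective _ Sum.inr_injective,
            Finset.card_product]
          simp [Finset.card_univ, htdef]
      _ ≤ _ := Finset.card_le_card hsub
  -- split of A
  have hLR : (A.filter (fun x => x.isLeft)).card +
      (A.filter (fun x => ¬ x.isLeft)).card = 2 * k * Γ := by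
    rw [Finset.card_filter_add_card_filter_not, hcardA]
  rw [show 2 * k * Γ = 2 * (k * Γ) by ring] at hLR
  -- c ≤ covered by T
  have hcT : (Edges.filter (fun e => ∃ u : V, ∃ i : Fin Γ,
        u ∈ e ∧ ord u e = i ∧ Sum.inl (u, i) ∈ A)).card ≤
      (Edges.filter (fun e => ∃ v ∈ T, v ∈ e)).card := by
    apply Finset.card_le_card
    intro e he
    simp only [Finset.mem_filter] at he ⊢
    obtain ⟨heE, u, i, hue, hoi, hmem⟩ := he
    exact ⟨heE, u, by simp [hTdef]; exact ⟨i, hoi ▸ hmem⟩, hue⟩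
  -- choose S' ⊆ T of size min t k
  obtain ⟨S', hS'T, hS'card⟩ := Finset.exists_subset_card_eq
    (min_le_left t k)
  -- removal bound
  have hrem : (Edges.filter (fun e => ∃ v ∈ T, v ∈ e)).card ≤
      (Edges.filter (fun e => ∃ v ∈ S', v ∈ e)).card + (t - min t k) * Γ := by
    have hsub : Edges.filter (fun e => ∃ v ∈ T, v ∈ e) ⊆
        (Edges.filter (fun e => ∃ v ∈ S', v ∈ e)) ∪
          (T \ S').biUnion (fun v => Edges.filter (fun e => v ∈ e)) := by
      intro e he
      simp only [Finset.mem_filter] at he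
      obtain ⟨heE, v, hvT, hve⟩ := he
      rcases em (v ∈ S') with hvS' | hvS'
      · exact Finset.mem_union_left _ (Finset.mem_filter.2 ⟨heE, v, hvS', hve⟩)
      · refine Finset.mem_union_right _ (Finset.mem_biUnion.2
          ⟨v, Finset.mem_sdiff.2 ⟨hvT, hvS'⟩, Finset.mem_filter.2 ⟨heE, hve⟩⟩)
    calc (Edges.filter (fun e => ∃ v ∈ T, v ∈ e)).card
        ≤ ((Edges.filter (fun e => ∃ v ∈ S', v ∈ e)) ∪
            (T \ S').biUnion (fun v => Edges.filter (fun e => v ∈ e))).card :=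
          Finset.card_le_card hsub
      _ ≤ (Edges.filter (fun e => ∃ v ∈ S', v ∈ e)).card +
            ((T \ S').biUnion (fun v => Edges.filter (fun e => v ∈ e))).card :=
          Finset.card_union_le _ _
      _ ≤ (Edges.filter (fun e => ∃ v ∈ S', v ∈ e)).card + (t - min t k) * Γ := by
          refine Nat.add_le_add_left ?_ _
          calc ((T \ S').biUnion (fun v => Edges.filter (fun e => v ∈ e))).card
              ≤ ∑ v ∈ T \ S', (Edges.filter (fun e => v ∈ e)).card :=
                Finset.card_biUnion_le
            _ ≤ (T \ S').card * Γ := by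
                refine le_trans (Finset.sum_le_card_nsmul _ _ Γ
                  (fun v _ => hdeg v)) (le_of_eq (by simp [smul_eq_mul]))
            _ = (t - min t k) * Γ := by
                rw [Finset.card_sdiff_of_subset hS'T, hS'card]
  -- pad S' to size k
  obtain ⟨S, hS'S, _, hScard⟩ := Finset.exists_subsuperset_card_eq
    (S'.subset_univ) (hS'card ▸ min_le_right t k)
    (by simpa [Finset.card_univ] using hk)
  refine ⟨S, hScard, ?_⟩
  have hmono : (Edges.filter (fun e => ∃ v ∈ S', v ∈ e)).card ≤
      (Edges.filter (fun e => ∃ v ∈ S, v ∈ e)).card := by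
    apply Finset.card_le_card
    intro e he
    simp only [Finset.mem_filter] at he ⊢
    obtain ⟨heE, v, hv, hve⟩ := he
    exact ⟨heE, v, hS'S hv, hve⟩
  -- arithmetic
  rcases le_total t k with htk | hkt
  · have hZ : (t - min t k) * Γ = 0 := by
      rw [min_eq_left htk]; simp
    have hXY : t * Γ ≤ k * Γ := Nat.mul_le_mul_right _ htk
    omega
  · have hZ : (t - min t k) * Γ + k * Γ = t * Γ := by
      rw [min_eq_right hkt, ← Nat.add_mul, Nat.sub_add_cancel hkt]
    omega

/-- Correctness of the Max Vertex Cover reduction: for a graph `G` with edge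
set `Edges`, maximum degree `Γ`, and an injective incidence numbering `ord`,
there is a set of `k` vertices covering at least `W` edges iff there is a
viable set `A` of size `k' = 2kΓ` with `PD(A) ≥ W + kΓ`. -/
theorem max_vertex_cover_reduction_correct {V : Type*} [Fintype V] [DecidableEq V]
    (Edges : Finset (Sym2 V)) (hloopfree : ∀ e ∈ Edges, ¬ e.IsDiag)
    (Γ k : ℕ) (hΓ : 1 ≤ Γ)
    (hdeg : ∀ v : V, (Edges.filter (fun e => v ∈ e)).card ≤ Γ)
    (ord : V → Sym2 V → Fin Γ)
    (hord : ∀ v : V, ∀ e ∈ Edges, ∀ e' ∈ Edges,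
      v ∈ e → v ∈ e' → ord v e = ord v e' → e = e')
    (hk : k ≤ Fintype.card V)
    (W : ℕ) :
    (∃ S : Finset V, S.card = k ∧
        W ≤ (Edges.filter (fun e => ∃ v ∈ S, v ∈ e)).card) ↔
      (∃ A : Finset ((V × Fin Γ) ⊕ (V × Fin Γ)),
        Viable mvcE A ∧ A.card = 2 * k * Γ ∧ W + k * Γ ≤ mvcPD Edges ord A) := by
  constructor
  · rintro ⟨S, hc, hcov⟩
    exact mvc_forward Edges Γ k hΓ ord W S hc hcov
  · rintro ⟨A, h1, h2, h3⟩
    exact mvc_backward Edges Γ k hΓ hdeg ord hk W A h1 h2 h3
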